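/- arXiv:1205.4812 — 2 statements merged into one kernel-verified Lean document; each statement's English description precedes it below -/
import Mathlib

section
/- Let 1 < p < ∞ and 0 < T < ∞. For nonnegative measurable functions g_j : (0,T) → [0,∞), j ∈ ℤ, with f_j(r) = e^{-c 2^{2j} r} for a fixed c > 0, there is a constant C independent of T such that ∫_0^T ∫_0^t (Σ_{j=-∞}^∞ f_j(t−s) g_j(s))^p ds dt ≤ C ∫_0^T Σ_{j=-∞}^∞ 2^{-2j} g_j(s)^p ds. -/
open MeasureTheory Real ENNReal


lemma aux_exp {x : ℝ} (hx : 0 < x) (N : ℕ) (hN : N ≠ 0) :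
    Real.exp (-x) ≤ (N:ℝ)^N / x^N := by
  have hN' : (0:ℝ) < N := by positivity
  have h1 : (x / N) ^ N ≤ Real.exp x := by
    calc (x/N)^N ≤ (Real.exp (x/N))^N := by
          apply pow_le_pow_left₀ (by positivity)
          have := Real.add_one_le_exp (x/(N:ℝ))
          linarith
      _ = Real.exp x := by
          rw [← Real.exp_nat_mul]
          congr 1
          field_simp
  rw [div_pow] at h1
  rw [Real.exp_neg]
  have hxN : 0 < x^N / (N:ℝ)^N := by positivity
  calc (Real.exp x)⁻¹ ≤ (x^N/(N:ℝ)^N)⁻¹ := inv_anti₀ hxN h1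
    _ = (N:ℝ)^N / x^N := by rw [inv_div]

set_option maxHeartbeats 2000000 in
lemma aux_sum (c θ : ℝ) (hc : 0 < c) (hθ : 0 < θ) :
    ∃ K : ℝ≥0∞, K ≠ ⊤ ∧ ∀ r : ℝ, 0 < r →
      ∑' j : ℤ, ENNReal.ofReal (Real.exp (-c * (2:ℝ)^(2*j) * r)) *
          ENNReal.ofReal ((2:ℝ) ^ (θ * (j:ℝ)))
        ≤ K * ENNReal.ofReal (r ^ (-(θ/2))) := by
  classical
  set N : ℕ := ⌈θ⌉₊ + 1 with hNdef
  have hNne : N ≠ 0 := Nat.succ_ne_zero _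
  have hθN : θ ≤ (N:ℝ) := by
    have := Nat.le_ceil θ
    have h2 : ((⌈θ⌉₊ : ℕ) : ℝ) ≤ (N:ℝ) := by exact_mod_cast Nat.le_succ _
    linarith
  set B : ℝ := (2:ℝ)^(2*θ) * (1 + ((N:ℝ)/c)^N) with hBdef
  have hBpos : 0 < B := by positivity
  have hBone : 1 ≤ B := by
    have h1 : (1:ℝ) ≤ (2:ℝ)^(2*θ) := by
      rw [show (1:ℝ) = (2:ℝ)^(0:ℝ) by simp]
      exact Real.rpow_le_rpow_of_exponent_le one_le_two (by positivity)
    nlinarith [pow_nonneg (div_nonneg (Nat.cast_nonneg N) hc.le) N]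
  set ρ : ℝ≥0∞ := ENNReal.ofReal ((2:ℝ)^(-θ)) with hρdef
  have hρlt : ρ < 1 := by
    rw [hρdef, ← ENNReal.ofReal_one]
    exact ENNReal.ofReal_lt_ofReal_iff_of_nonneg (by positivity) |>.2
      (Real.rpow_lt_one_of_one_lt_of_neg one_lt_two (by linarith))
  refine ⟨ENNReal.ofReal B * (2 * (1 - ρ)⁻¹), ?_, ?_⟩
  · refine ENNReal.mul_ne_top ENNReal.ofReal_ne_top (ENNReal.mul_ne_top (by simp) ?_)
    simp only [Ne, ENNReal.inv_eq_top, tsub_eq_zero_iff_le]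
    exact fun h => absurd (h.trans_lt hρlt) (lt_irrefl _)
  intro r hr
  -- the dyadic index m with 2^(2m) ≤ r⁻¹ < 2^(2m+2)
  set m : ℤ := ⌊Real.logb 4 r⁻¹⌋ with hmdef
  have h14 : (1:ℝ) < 4 := by norm_num
  have hrinv : (0:ℝ) < r⁻¹ := inv_pos.2 hr
  have hm1 : (2:ℝ) ^ (2*(m:ℝ)) ≤ r⁻¹ := by
    have h1 : (4:ℝ) ^ ((m:ℤ):ℝ) ≤ (4:ℝ) ^ Real.logb 4 r⁻¹ :=
      Real.rpow_le_rpow_of_exponent_le h14.le (Int.floor_le _)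
    rw [Real.rpow_logb (by norm_num) (by norm_num) hrinv] at h1
    refine le_trans (le_of_eq ?_) h1
    rw [show (4:ℝ) = (2:ℝ)^(2:ℝ) by
      rw [show (2:ℝ) = ((2:ℕ):ℝ) by norm_num, Real.rpow_natCast]; norm_num]
    rw [← Real.rpow_mul (by norm_num)]
  have hm2 : r⁻¹ < (2:ℝ) ^ (2*(m:ℝ) + 2) := by
    have h1 : (4:ℝ) ^ Real.logb 4 r⁻¹ < (4:ℝ) ^ (((m:ℝ)) + 1) :=
      Real.rpow_lt_rpow_of_exponent_lt h14 (Int.lt_floor_add_one _)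
    rw [Real.rpow_logb (by norm_num) (by norm_num) hrinv] at h1
    refine h1.trans_le (le_of_eq ?_)
    rw [show (4:ℝ) = (2:ℝ)^(2:ℝ) by
      rw [show (2:ℝ) = ((2:ℕ):ℝ) by norm_num, Real.rpow_natCast]; norm_num]
    rw [← Real.rpow_mul (by norm_num)]
    ring_nf
  have hrθ : (2:ℝ) ^ (θ * (m:ℝ)) ≤ r ^ (-(θ/2)) := by
    have h1 : ((2:ℝ) ^ (2*(m:ℝ))) ^ (θ/2) ≤ (r⁻¹) ^ (θ/2) :=
      Real.rpow_le_rpow (by positivity) hm1 (by positivity)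
    rw [← Real.rpow_mul (by norm_num)] at h1
    rw [Real.inv_rpow hr.le, ← Real.rpow_neg hr.le] at h1
    refine le_trans (le_of_eq ?_) h1
    ring_nf
  have hzpow : ∀ j : ℤ, ((2:ℝ)^(2*j) : ℝ) = (2:ℝ) ^ (2*(j:ℝ)) := fun j => by
    rw [← Real.rpow_intCast 2 (2*j)]
    congr 1
    push_cast
    ring
  have hterm : ∀ j : ℤ,
      ENNReal.ofReal (Real.exp (-c * (2:ℝ)^(2*j) * r)) * ENNReal.ofReal ((2:ℝ) ^ (θ * (j:ℝ)))
        ≤ ENNReal.ofReal (r ^ (-(θ/2))) *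
            ENNReal.ofReal (B * (2:ℝ) ^ (-(θ * ((|j - m| : ℤ) : ℝ)))) := by
    intro j
    rw [← ENNReal.ofReal_mul (Real.exp_nonneg _), ← ENNReal.ofReal_mul (by positivity)]
    refine ENNReal.ofReal_le_ofReal ?_
    rcases le_or_gt j m with hj | hj
    · -- low range j ≤ m
      have habs : ((|j - m| : ℤ) : ℝ) = (m:ℝ) - (j:ℝ) := by
        rw [abs_of_nonpos (by omega)]
        push_cast
        ring
      have hexp : Real.exp (-c * (2:ℝ)^(2*j) * r) ≤ 1 := by
        rw [← Real.exp_zero]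
        apply Real.exp_le_exp.2
        have h1 : (0:ℝ) ≤ c * (2:ℝ)^(2*j) * r := by
          have := zpow_pos (two_pos (α := ℝ)) (2*j)
          positivity
        nlinarith
      calc Real.exp (-c * (2:ℝ)^(2*j) * r) * (2:ℝ)^(θ*(j:ℝ))
          ≤ 1 * (2:ℝ)^(θ*(j:ℝ)) := mul_le_mul_of_nonneg_right hexp (by positivity)
        _ = (2:ℝ)^(θ*(m:ℝ)) * (2:ℝ)^(-(θ * ((m:ℝ) - (j:ℝ)))) := by
            rw [one_mul, ← Real.rpow_add two_pos]
            ring_nf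
        _ ≤ r ^ (-(θ/2)) * (B * (2:ℝ)^(-(θ * ((m:ℝ) - (j:ℝ))))) := by
            have hB2 : (2:ℝ)^(-(θ*((m:ℝ)-(j:ℝ)))) ≤ B * (2:ℝ)^(-(θ*((m:ℝ)-(j:ℝ)))) := by
              nlinarith [Real.rpow_pos_of_pos (two_pos (α := ℝ)) (-(θ*((m:ℝ)-(j:ℝ))))]
            exact mul_le_mul hrθ hB2 (by positivity) (by positivity)
        _ = r ^ (-(θ/2)) * (B * (2:ℝ)^(-(θ * ((|j - m| : ℤ) : ℝ)))) := by rw [habs]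
    · -- high range j > m
      set k : ℝ := (j:ℝ) - (m:ℝ) - 1 with hkdef
      have hk0 : 0 ≤ k := by
        rw [hkdef]
        have : (m:ℝ) + 1 ≤ (j:ℝ) := by exact_mod_cast hj
        linarith
      have habs : ((|j - m| : ℤ) : ℝ) = k + 1 := by
        rw [abs_of_nonneg (by omega)]
        push_cast
        rw [hkdef]
        ring
      have hone : (1:ℝ) ≤ (2:ℝ)^(2*(m:ℝ)+2) * r := by
        have h1 := mul_lt_mul_of_pos_right hm2 hr
        rw [inv_mul_cancel₀ hr.ne'] at h1
        exact h1.le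
      have key1 : (2:ℝ)^(2*k) ≤ (2:ℝ)^(2*(j:ℝ)) * r := by
        have hsplit : (2:ℝ)^(2*(j:ℝ)) = (2:ℝ)^(2*k) * (2:ℝ)^(2*(m:ℝ)+2) := by
          rw [← Real.rpow_add two_pos]
          congr 1
          rw [hkdef]
          ring
        rw [hsplit, mul_assoc]
        nlinarith [Real.rpow_pos_of_pos (two_pos (α := ℝ)) (2*k),
          Real.rpow_pos_of_pos (two_pos (α := ℝ)) (2*(m:ℝ)+2)]
      have key2 : Real.exp (-c * (2:ℝ)^(2*j) * r) ≤ Real.exp (-(c * (2:ℝ)^(2*k))) := by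
        apply Real.exp_le_exp.2
        rw [hzpow]
        nlinarith [key1]
      have key3 : Real.exp (-(c * (2:ℝ)^(2*k))) ≤ ((N:ℝ)/c)^N * (2:ℝ)^(-(2*k*(N:ℝ))) := by
        have hx : (0:ℝ) < c * (2:ℝ)^(2*k) := by positivity
        refine (aux_exp hx N hNne).trans (le_of_eq ?_)
        have h2 : ((2:ℝ)^(2*k))^(N:ℕ) = (2:ℝ)^(2*k*(N:ℝ)) := by
          rw [← Real.rpow_natCast ((2:ℝ)^(2*k)) N, ← Real.rpow_mul two_pos.le]
        rw [mul_pow, h2, Real.rpow_neg two_pos.le, div_pow, div_mul_eq_div_div,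
          div_eq_mul_inv (((N:ℝ)^N / c^N)) ]
      calc Real.exp (-c * (2:ℝ)^(2*j) * r) * (2:ℝ)^(θ*(j:ℝ))
          ≤ (((N:ℝ)/c)^N * (2:ℝ)^(-(2*k*(N:ℝ)))) * (2:ℝ)^(θ*(j:ℝ)) :=
            mul_le_mul_of_nonneg_right (key2.trans key3) (by positivity)
        _ = ((N:ℝ)/c)^N * (2:ℝ)^(θ*(j:ℝ) - 2*k*(N:ℝ)) := by
            rw [mul_assoc, ← Real.rpow_add two_pos]
            ring_nf
        _ ≤ ((N:ℝ)/c)^N * (2:ℝ)^(θ*(m:ℝ) + 2*θ - θ*(k+1)) := by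
            refine mul_le_mul_of_nonneg_left
              (Real.rpow_le_rpow_of_exponent_le one_le_two ?_) (by positivity)
            have hjmk : (j:ℝ) = (m:ℝ) + k + 1 := by rw [hkdef]; ring
            rw [hjmk]
            nlinarith [hk0, hθN]
        _ = (2:ℝ)^(θ*(m:ℝ)) * (((N:ℝ)/c)^N * (2:ℝ)^(2*θ)) * (2:ℝ)^(-(θ*(k+1))) := by
            rw [show θ*(m:ℝ) + 2*θ - θ*(k+1) = θ*(m:ℝ) + (2*θ + -(θ*(k+1))) by ring,
              Real.rpow_add two_pos, Real.rpow_add two_pos]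
            ring
        _ ≤ r^(-(θ/2)) * (B * (2:ℝ)^(-(θ*(k+1)))) := by
            have hBge : ((N:ℝ)/c)^N * (2:ℝ)^(2*θ) ≤ B := by
              rw [hBdef]
              nlinarith [Real.rpow_pos_of_pos (two_pos (α := ℝ)) (2*θ),
                pow_nonneg (div_nonneg (Nat.cast_nonneg N) hc.le) N]
            have h5 : (2:ℝ)^(θ*(m:ℝ)) * (((N:ℝ)/c)^N * (2:ℝ)^(2*θ)) ≤ r^(-(θ/2)) * B :=
              mul_le_mul hrθ hBge (by positivity) (by positivity)
            calc (2:ℝ)^(θ*(m:ℝ)) * (((N:ℝ)/c)^N * (2:ℝ)^(2*θ)) * (2:ℝ)^(-(θ*(k+1)))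
                ≤ (r^(-(θ/2)) * B) * (2:ℝ)^(-(θ*(k+1))) :=
                  mul_le_mul_of_nonneg_right h5 (by positivity)
              _ = r^(-(θ/2)) * (B * (2:ℝ)^(-(θ*(k+1)))) := mul_assoc _ _ _
        _ = r^(-(θ/2)) * (B * (2:ℝ)^(-(θ*((|j-m|:ℤ):ℝ)))) := by rw [habs]
  -- now sum the dominating series
  have hρn : ∀ n : ℕ, ENNReal.ofReal ((2:ℝ)^(-(θ*(n:ℝ)))) = ρ^n := by
    intro n
    rw [hρdef, ← ENNReal.ofReal_pow (by positivity), ← Real.rpow_natCast ((2:ℝ)^(-θ)) n,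
      ← Real.rpow_mul two_pos.le]
    ring_nf
  have hsum : ∑' i : ℤ, ENNReal.ofReal (B * (2:ℝ)^(-(θ * ((|i|:ℤ):ℝ))))
      ≤ ENNReal.ofReal B * (2 * (1-ρ)⁻¹) := by
    have heq : ∀ i : ℤ, ENNReal.ofReal (B * (2:ℝ)^(-(θ*((|i|:ℤ):ℝ))))
        = ENNReal.ofReal B * ENNReal.ofReal ((2:ℝ)^(-(θ*((|i|:ℤ):ℝ)))) := fun i =>
      ENNReal.ofReal_mul hBpos.le
    simp only [heq]
    rw [ENNReal.tsum_mul_left]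
    refine mul_le_mul_right ?_ _
    have hints : ∑' i : ℤ, ENNReal.ofReal ((2:ℝ)^(-(θ*((|i|:ℤ):ℝ))))
        = ∑' n : ℕ, (ENNReal.ofReal ((2:ℝ)^(-(θ*(n:ℝ))))
            + ENNReal.ofReal ((2:ℝ)^(-(θ*((n:ℝ)+1))))) := by
      rw [← tsum_nat_add_neg_add_one ENNReal.summable]
      refine tsum_congr fun n => ?_
      congr 3
      · congr 2
        rw [show |(n:ℤ)| = (n:ℤ) by simp]
        push_cast
        ring
      · congr 2
        rw [show |(-((n:ℤ)+1))| = (n:ℤ)+1 by rw [abs_neg]; exact abs_of_nonneg (by omega)]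
        push_cast
        ring
    rw [hints]
    calc ∑' n : ℕ, (ENNReal.ofReal ((2:ℝ)^(-(θ*(n:ℝ))))
            + ENNReal.ofReal ((2:ℝ)^(-(θ*((n:ℝ)+1)))))
        ≤ ∑' n : ℕ, 2 * ρ^n := by
          refine ENNReal.tsum_le_tsum fun n => ?_
          rw [two_mul, ← hρn n]
          refine add_le_add le_rfl (ENNReal.ofReal_le_ofReal ?_)
          apply Real.rpow_le_rpow_of_exponent_le one_le_two
          nlinarith
      _ = 2 * (1-ρ)⁻¹ := by rw [ENNReal.tsum_mul_left, ENNReal.tsum_geometric]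
  calc ∑' j : ℤ, ENNReal.ofReal (Real.exp (-c * (2:ℝ)^(2*j) * r)) *
          ENNReal.ofReal ((2:ℝ) ^ (θ * (j:ℝ)))
      ≤ ∑' j : ℤ, ENNReal.ofReal (r^(-(θ/2))) *
          ENNReal.ofReal (B * (2:ℝ)^(-(θ * ((|j - m|:ℤ):ℝ)))) := ENNReal.tsum_le_tsum hterm
    _ = ENNReal.ofReal (r^(-(θ/2))) *
          ∑' j : ℤ, ENNReal.ofReal (B * (2:ℝ)^(-(θ * ((|j - m|:ℤ):ℝ)))) := ENNReal.tsum_mul_left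
    _ = ENNReal.ofReal (r^(-(θ/2))) *
          ∑' i : ℤ, ENNReal.ofReal (B * (2:ℝ)^(-(θ * ((|i|:ℤ):ℝ)))) := by
        congr 1
        exact (Equiv.subRight m).tsum_eq fun i => ENNReal.ofReal (B * (2:ℝ)^(-(θ * ((|i|:ℤ):ℝ))))
    _ ≤ ENNReal.ofReal (r^(-(θ/2))) * (ENNReal.ofReal B * (2 * (1-ρ)⁻¹)) :=
        mul_le_mul_right hsum _
    _ = (ENNReal.ofReal B * (2 * (1-ρ)⁻¹)) * ENNReal.ofReal (r^(-(θ/2))) := mul_comm _ _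

lemma aux_holder {p q : ℝ} (hpq : Real.HolderConjugate p q) (a b : ℤ → ℝ≥0∞) :
    (∑' j : ℤ, a j * b j) ^ p ≤ (∑' j : ℤ, a j ^ q) ^ (p - 1) * ∑' j : ℤ, b j ^ p := by
  have h := ENNReal.lintegral_mul_le_Lp_mul_Lq (Measure.count : Measure ℤ) hpq
    (f := b) (g := a) (measurable_of_countable _).aemeasurable (measurable_of_countable _).aemeasurable
  simp only [Pi.mul_apply, lintegral_count] at h
  have h2 : (∑' j : ℤ, a j * b j) ^ p ≤ ((∑' j, b j ^ p) ^ (1/p) * (∑' j, a j ^ q) ^ (1/q)) ^ p := by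
    refine ENNReal.rpow_le_rpow ?_ hpq.nonneg
    simpa [mul_comm] using h
  refine h2.trans_eq ?_
  rw [ENNReal.mul_rpow_of_nonneg _ _ hpq.nonneg, ← ENNReal.rpow_mul, ← ENNReal.rpow_mul,
    one_div_mul_cancel hpq.ne_zero, ENNReal.rpow_one]
  rw [mul_comm]
  congr 1
  congr 1
  rw [one_div, inv_mul_eq_div, hpq.div_conj_eq_sub_one]

lemma aux_ton (T : ℝ) (F G : ℤ → ℝ → ℝ≥0∞) (hF : ∀ j, Measurable (F j))
    (hG : ∀ j, Measurable (G j)) :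
    ∫⁻ t in Set.Ioo (0:ℝ) T, ∫⁻ s in Set.Ioo (0:ℝ) t, ∑' j : ℤ, F j (t - s) * G j s
      ≤ ∑' j : ℤ, (∫⁻ r in Set.Ioi (0:ℝ), F j r) * ∫⁻ s in Set.Ioo (0:ℝ) T, G j s := by
  set H : ℤ → ℝ × ℝ → ℝ≥0∞ := fun j z =>
    (Set.Ioi (0:ℝ)).indicator (F j) (z.1 - z.2) * (Set.Ioo (0:ℝ) T).indicator (G j) z.2 with hH
  have hHm : ∀ j, Measurable (H j) := fun j =>
    (((hF j).indicator measurableSet_Ioi).comp (measurable_fst.sub measurable_snd)).mul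
      (((hG j).indicator measurableSet_Ioo).comp measurable_snd)
  calc ∫⁻ t in Set.Ioo (0:ℝ) T, ∫⁻ s in Set.Ioo (0:ℝ) t, ∑' j : ℤ, F j (t - s) * G j s
      ≤ ∫⁻ t in Set.Ioo (0:ℝ) T, ∫⁻ s in Set.Ioo (0:ℝ) t, ∑' j : ℤ, H j (t, s) := by
        refine lintegral_mono_ae ((ae_restrict_iff' measurableSet_Ioo).2 (ae_of_all _ fun t ht => ?_))
        refine lintegral_mono_ae ((ae_restrict_iff' measurableSet_Ioo).2 (ae_of_all _ fun s hs => ?_))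
        refine le_of_eq (tsum_congr fun j => ?_)
        rw [hH]
        simp only []
        rw [Set.indicator_of_mem (by simp [sub_pos.2 hs.2] : (t:ℝ) - s ∈ Set.Ioi (0:ℝ)),
          Set.indicator_of_mem (Set.mem_Ioo.2 ⟨hs.1, hs.2.trans ht.2⟩)]
    _ ≤ ∫⁻ t in Set.Ioo (0:ℝ) T, ∫⁻ s, ∑' j : ℤ, H j (t, s) :=
        lintegral_mono fun t => lintegral_mono' Measure.restrict_le_self le_rfl
    _ ≤ ∫⁻ t, ∫⁻ s, ∑' j : ℤ, H j (t, s) := lintegral_mono' Measure.restrict_le_self le_rfl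
    _ = ∫⁻ z : ℝ × ℝ, ∑' j : ℤ, H j z ∂(volume.prod volume) :=
        (lintegral_prod _ (Measurable.ennreal_tsum hHm).aemeasurable).symm
    _ = ∑' j : ℤ, ∫⁻ z : ℝ × ℝ, H j z ∂(volume.prod volume) :=
        lintegral_tsum fun j => (hHm j).aemeasurable
    _ = ∑' j : ℤ, (∫⁻ r in Set.Ioi (0:ℝ), F j r) * ∫⁻ s in Set.Ioo (0:ℝ) T, G j s := by
        refine tsum_congr fun j => ?_
        rw [lintegral_prod_symm _ (hHm j).aemeasurable]
        have inner : ∀ s : ℝ, ∫⁻ t, H j (t, s) =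
            (∫⁻ r in Set.Ioi (0:ℝ), F j r) * (Set.Ioo (0:ℝ) T).indicator (G j) s := by
          intro s
          rw [hH]
          simp only []
          have hfm : Measurable fun t : ℝ => (Set.Ioi (0:ℝ)).indicator (F j) (t - s) :=
            ((hF j).indicator measurableSet_Ioi).comp (measurable_sub_const s)
          rw [lintegral_mul_const _ hfm]
          congr 1
          have : ∀ t : ℝ, (Set.Ioi (0:ℝ)).indicator (F j) (t - s)
              = (Set.Ioi (0:ℝ)).indicator (F j) (t + (-s)) := by intro t; rw [sub_eq_add_neg]
          rw [funext this, lintegral_add_right_eq_self (fun r => (Set.Ioi (0:ℝ)).indicator (F j) r) (-s),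
            lintegral_indicator measurableSet_Ioi]
        simp_rw [inner]
        rw [lintegral_const_mul _ ((hG j).indicator measurableSet_Ioo),
          lintegral_indicator measurableSet_Ioo]

lemma aux_gamma {a : ℝ} (ha : 0 < a) :
    ∫⁻ r in Set.Ioi (0:ℝ), ENNReal.ofReal (r ^ (-(1/2) : ℝ) * Real.exp (-(a * r)))
      = ENNReal.ofReal ((1/a) ^ ((1:ℝ)/2) * Real.Gamma (1/2)) := by
  have hint : IntegrableOn (fun r : ℝ => r ^ (-(1/2):ℝ) * Real.exp (-(a * r))) (Set.Ioi 0) := by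
    have h := integrableOn_rpow_mul_exp_neg_mul_rpow (s := -(1/2)) (p := 1) (b := a)
      (by norm_num) one_pos ha
    refine h.congr_fun (fun x hx => ?_) measurableSet_Ioi
    simp only [Real.rpow_one, neg_mul]
  have hnn : 0 ≤ᵐ[volume.restrict (Set.Ioi (0:ℝ))]
      fun r : ℝ => r ^ (-(1/2):ℝ) * Real.exp (-(a * r)) := by
    filter_upwards [ae_restrict_mem measurableSet_Ioi] with x hx
    have : (0:ℝ) < x := hx
    positivity
  rw [← ofReal_integral_eq_lintegral_ofReal hint hnn]
  congr 1
  have h2 := Real.integral_rpow_mul_exp_neg_mul_Ioi (a := 1/2) (r := a) (by norm_num) ha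
  norm_num at h2 ⊢

  exact h2

lemma aux_pointwise (p c θ : ℝ) (hp : 1 < p) (hθ : θ = (p-1)⁻¹) (r : ℝ) (G : ℤ → ℝ≥0∞) :
    (∑' j : ℤ, ENNReal.ofReal (Real.exp (-c * (2:ℝ)^(2*j) * r)) * G j) ^ p
      ≤ (∑' j : ℤ, ENNReal.ofReal (Real.exp (-c * (2:ℝ)^(2*j) * r)) *
            ENNReal.ofReal ((2:ℝ) ^ (θ * (j:ℝ)))) ^ (p - 1) *
        ∑' j : ℤ, ENNReal.ofReal (Real.exp (-c * (2:ℝ)^(2*j) * r)) *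
            ENNReal.ofReal ((2:ℝ) ^ (-(j:ℝ))) * G j ^ p := by
  have hq := Real.HolderConjugate.conjExponent hp
  set q : ℝ := Real.conjExponent p with hqdef
  have hp1 : p - 1 ≠ 0 := by linarith
  have hq0 : q ≠ 0 := hq.symm.ne_zero
  have hpq1 : p / q = p - 1 := hq.div_conj_eq_sub_one
  have hqp1 : 1/q * p = p - 1 := by rw [one_div, inv_mul_eq_div]; exact hpq1
  set f : ℤ → ℝ≥0∞ := fun j => ENNReal.ofReal (Real.exp (-c * (2:ℝ)^(2*j) * r)) with hfdef
  set w : ℤ → ℝ≥0∞ := fun j => ENNReal.ofReal ((2:ℝ) ^ (θ * (j:ℝ))) with hwdef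
  have hf0 : ∀ j, f j ≠ 0 := fun j => (ENNReal.ofReal_pos.2 (Real.exp_pos _)).ne'
  have hftop : ∀ j, f j ≠ ⊤ := fun j => ENNReal.ofReal_ne_top
  have hw0 : ∀ j, w j ≠ 0 := fun j => (ENNReal.ofReal_pos.2 (by positivity)).ne'
  have hwtop : ∀ j, w j ≠ ⊤ := fun j => ENNReal.ofReal_ne_top
  set a : ℤ → ℝ≥0∞ := fun j => f j ^ (1/q) * w j ^ (1/q) with hadef
  set b : ℤ → ℝ≥0∞ := fun j => f j ^ (1/p) * w j ^ (-(1/q)) * G j with hbdef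
  have hab : ∀ j, f j * G j = a j * b j := by
    intro j
    rw [hadef, hbdef]
    simp only []
    rw [show f j ^ (1/q) * w j ^ (1/q) * (f j ^ (1/p) * w j ^ (-(1/q)) * G j)
        = (f j ^ (1/q) * f j ^ (1/p)) * (w j ^ (1/q) * w j ^ (-(1/q))) * G j by ring,
      ← ENNReal.rpow_add _ _ (hf0 j) (hftop j), ← ENNReal.rpow_add _ _ (hw0 j) (hwtop j),
      show 1/q + 1/p = 1 by rw [add_comm, one_div, one_div]; exact hq.inv_add_inv_eq_one,
      add_neg_cancel, ENNReal.rpow_one, ENNReal.rpow_zero, mul_one]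
  have ha : ∀ j, a j ^ q = f j * w j := by
    intro j
    rw [hadef]
    simp only []
    rw [ENNReal.mul_rpow_of_nonneg _ _ hq.symm.nonneg, ← ENNReal.rpow_mul, ← ENNReal.rpow_mul,
      one_div_mul_cancel hq0, ENNReal.rpow_one, ENNReal.rpow_one]
  have hb : ∀ j, b j ^ p = f j * ENNReal.ofReal ((2:ℝ) ^ (-(j:ℝ))) * G j ^ p := by
    intro j
    rw [hbdef]
    simp only []
    rw [ENNReal.mul_rpow_of_nonneg _ _ hq.nonneg, ENNReal.mul_rpow_of_nonneg _ _ hq.nonneg,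
      ← ENNReal.rpow_mul, ← ENNReal.rpow_mul, one_div_mul_cancel hq.ne_zero, ENNReal.rpow_one]
    congr 2
    rw [hwdef]
    simp only []
    rw [ENNReal.ofReal_rpow_of_pos (by positivity), ← Real.rpow_mul two_pos.le]
    congr 1
    rw [hθ, show -(1/q) * p = -(p-1) by rw [neg_mul, hqp1]]
    congr 1
    field_simp
  calc (∑' j : ℤ, f j * G j) ^ p = (∑' j : ℤ, a j * b j) ^ p := by rw [tsum_congr hab]
    _ ≤ (∑' j : ℤ, a j ^ q) ^ (p - 1) * ∑' j : ℤ, b j ^ p := aux_holder hq a b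
    _ = _ := by rw [tsum_congr ha, tsum_congr hb]

/-- Hardy-type inequality over the full range of dyadic indices
j ∈ ℤ, with kernels f_j(r) = e^{-c 2^{2j} r}; the constant is independent of T. -/
theorem stmt8 (p c : ℝ) (hp : 1 < p) (hc : 0 < c) :
    ∃ C > (0:ℝ), ∀ T : ℝ, 0 < T →
      ∀ g : ℤ → ℝ → ℝ≥0∞, (∀ j, Measurable (g j)) →
        ∫⁻ t in Set.Ioo (0:ℝ) T, ∫⁻ s in Set.Ioo (0:ℝ) t,
            (∑' j : ℤ, ENNReal.ofReal (Real.exp (-c * (2:ℝ)^(2*j) * (t - s))) *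
              g j s) ^ p
          ≤ ENNReal.ofReal C *
            ∫⁻ s in Set.Ioo (0:ℝ) T,
              ∑' j : ℤ, ENNReal.ofReal ((2:ℝ)^(-2*j)) * (g j s) ^ p := by
  have hp1 : (0:ℝ) < p - 1 := by linarith
  set θ : ℝ := (p-1)⁻¹ with hθdef
  have hθpos : 0 < θ := inv_pos.2 hp1
  obtain ⟨K, hKtop, hK⟩ := aux_sum c θ hc hθpos
  set Kp : ℝ≥0∞ := K ^ (p-1) with hKpdef
  have hKptop : Kp ≠ ⊤ := ENNReal.rpow_ne_top_of_nonneg hp1.le hKtop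
  set Cg : ℝ≥0∞ := ENNReal.ofReal ((1/c) ^ ((1:ℝ)/2) * Real.Gamma (1/2)) with hCgdef
  have hCtot : Kp * Cg ≠ ⊤ := ENNReal.mul_ne_top hKptop ENNReal.ofReal_ne_top
  refine ⟨(Kp * Cg).toReal + 1, by positivity, ?_⟩
  intro T hT g hg
  set F : ℤ → ℝ → ℝ≥0∞ := fun j r => Kp *
      ENNReal.ofReal (r ^ (-(1/2) : ℝ) * Real.exp (-(c * (2:ℝ)^(2*j) * r))) with hFdef
  set G2 : ℤ → ℝ → ℝ≥0∞ := fun j s => ENNReal.ofReal ((2:ℝ)^(-(j:ℝ))) * g j s ^ p with hG2def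
  have hFm : ∀ j, Measurable (F j) := by
    intro j
    apply measurable_const.mul
    apply ENNReal.measurable_ofReal.comp
    exact ((measurable_id.pow_const _).mul ((measurable_id.const_mul _).neg.exp))
  have hG2m : ∀ j, Measurable (G2 j) :=
    fun j => measurable_const.mul ((hg j).pow measurable_const)
  -- Step A : pointwise bound
  have stepA : ∀ t s : ℝ, 0 < s → s < t →
      (∑' j : ℤ, ENNReal.ofReal (Real.exp (-c * (2:ℝ)^(2*j) * (t - s))) * g j s) ^ p
        ≤ ∑' j : ℤ, F j (t - s) * G2 j s := by
    intro t s hs hst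
    set r : ℝ := t - s with hrdef
    have hr : 0 < r := sub_pos.2 hst
    refine (aux_pointwise p c θ hp rfl r (fun j => g j s)).trans ?_
    have h1 : (∑' j : ℤ, ENNReal.ofReal (Real.exp (-c * (2:ℝ)^(2*j) * r)) *
          ENNReal.ofReal ((2:ℝ) ^ (θ * (j:ℝ)))) ^ (p - 1)
        ≤ Kp * ENNReal.ofReal (r ^ (-(1/2):ℝ)) := by
      refine (ENNReal.rpow_le_rpow (hK r hr) hp1.le).trans_eq ?_
      rw [ENNReal.mul_rpow_of_nonneg _ _ hp1.le, ← hKpdef]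
      congr 1
      rw [ENNReal.ofReal_rpow_of_pos (Real.rpow_pos_of_pos hr _),
        ← Real.rpow_mul hr.le]
      congr 2
      rw [hθdef]
      field_simp
    calc (∑' j : ℤ, ENNReal.ofReal (Real.exp (-c * (2:ℝ)^(2*j) * r)) *
            ENNReal.ofReal ((2:ℝ) ^ (θ * (j:ℝ)))) ^ (p - 1) *
          ∑' j : ℤ, ENNReal.ofReal (Real.exp (-c * (2:ℝ)^(2*j) * r)) *
            ENNReal.ofReal ((2:ℝ) ^ (-(j:ℝ))) * g j s ^ p
        ≤ (Kp * ENNReal.ofReal (r ^ (-(1/2):ℝ))) *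
          ∑' j : ℤ, ENNReal.ofReal (Real.exp (-c * (2:ℝ)^(2*j) * r)) *
            ENNReal.ofReal ((2:ℝ) ^ (-(j:ℝ))) * g j s ^ p :=
          mul_le_mul_left h1 _
      _ = ∑' j : ℤ, F j r * G2 j s := by
          rw [← ENNReal.tsum_mul_left]
          refine tsum_congr fun j => ?_
          rw [hFdef, hG2def]
          simp only []
          rw [ENNReal.ofReal_mul (by positivity : (0:ℝ) ≤ r ^ (-(1/2):ℝ)),
            show Real.exp (-(c * (2:ℝ)^(2*j) * r)) = Real.exp (-c * (2:ℝ)^(2*j) * r) by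
              congr 1; ring]
          ring
  -- Step B : integrate the pointwise bound
  have stepB : ∫⁻ t in Set.Ioo (0:ℝ) T, ∫⁻ s in Set.Ioo (0:ℝ) t,
      (∑' j : ℤ, ENNReal.ofReal (Real.exp (-c * (2:ℝ)^(2*j) * (t - s))) * g j s) ^ p
      ≤ ∫⁻ t in Set.Ioo (0:ℝ) T, ∫⁻ s in Set.Ioo (0:ℝ) t, ∑' j : ℤ, F j (t - s) * G2 j s := by
    refine lintegral_mono_ae ((ae_restrict_iff' measurableSet_Ioo).2 (ae_of_all _ fun t ht => ?_))
    refine lintegral_mono_ae ((ae_restrict_iff' measurableSet_Ioo).2 (ae_of_all _ fun s hs => ?_))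
    exact stepA t s hs.1 hs.2
  -- Step C/D : Tonelli and the Gamma integral
  have hgamma : ∀ j : ℤ, ∫⁻ r in Set.Ioi (0:ℝ), F j r
      = Kp * Cg * ENNReal.ofReal ((2:ℝ) ^ (-(j:ℝ))) := by
    intro j
    have ha : (0:ℝ) < c * (2:ℝ)^(2*j) := by
      have := zpow_pos (two_pos (α := ℝ)) (2*j)
      positivity
    rw [hFdef]
    simp only []
    have hmeas : Measurable fun r : ℝ =>
        ENNReal.ofReal (r ^ (-(1/2):ℝ) * Real.exp (-(c * (2:ℝ)^(2*j) * r))) :=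
      ENNReal.measurable_ofReal.comp
        ((measurable_id.pow_const _).mul ((measurable_id.const_mul _).neg.exp))
    rw [lintegral_const_mul _ hmeas]
    rw [show (fun r : ℝ => ENNReal.ofReal (r ^ (-(1/2):ℝ) *
        Real.exp (-(c * (2:ℝ)^(2*j) * r)))) = fun r : ℝ => ENNReal.ofReal (r ^ (-(1/2):ℝ) *
        Real.exp (-((c * (2:ℝ)^(2*j)) * r))) by funext r; rw [mul_assoc]]
    rw [aux_gamma ha, hCgdef, mul_assoc]
    congr 1
    rw [← ENNReal.ofReal_mul (by positivity)]
    congr 1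
    have hsplit : (1/(c * (2:ℝ)^(2*j))) ^ ((1:ℝ)/2)
        = (1/c) ^ ((1:ℝ)/2) * (2:ℝ) ^ (-(j:ℝ)) := by
      rw [show (1:ℝ)/(c * (2:ℝ)^(2*j)) = (1/c) * ((2:ℝ)^(2*j))⁻¹ by field_simp,
        Real.mul_rpow (by positivity) (by positivity)]
      congr 1
      rw [show ((2:ℝ)^(2*j))⁻¹ = (2:ℝ)^(-(2*j)) by rw [zpow_neg],
        ← Real.rpow_intCast (2:ℝ) (-(2*j)), ← Real.rpow_mul two_pos.le]
      congr 1
      push_cast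
      ring
    rw [hsplit]
    ring
  calc ∫⁻ t in Set.Ioo (0:ℝ) T, ∫⁻ s in Set.Ioo (0:ℝ) t,
        (∑' j : ℤ, ENNReal.ofReal (Real.exp (-c * (2:ℝ)^(2*j) * (t - s))) * g j s) ^ p
      ≤ ∫⁻ t in Set.Ioo (0:ℝ) T, ∫⁻ s in Set.Ioo (0:ℝ) t, ∑' j : ℤ, F j (t - s) * G2 j s := stepB
    _ ≤ ∑' j : ℤ, (∫⁻ r in Set.Ioi (0:ℝ), F j r) * ∫⁻ s in Set.Ioo (0:ℝ) T, G2 j s :=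
        aux_ton T F G2 hFm hG2m
    _ = Kp * Cg * ∑' j : ℤ, ∫⁻ s in Set.Ioo (0:ℝ) T,
          ENNReal.ofReal ((2:ℝ)^(-2*j)) * g j s ^ p := by
        rw [← ENNReal.tsum_mul_left]
        refine tsum_congr fun j => ?_
        rw [hgamma j, hG2def]
        simp only []
        rw [lintegral_const_mul _ ((hg j).pow measurable_const)]
        have h2 : ENNReal.ofReal ((2:ℝ) ^ (-(j:ℝ))) * ENNReal.ofReal ((2:ℝ) ^ (-(j:ℝ)))
            = ENNReal.ofReal ((2:ℝ)^(-2*j)) := by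
          rw [← ENNReal.ofReal_mul (by positivity), ← Real.rpow_add two_pos,
            ← Real.rpow_intCast (2:ℝ) (-2*j)]
          congr 1
          push_cast
          ring
        rw [lintegral_const_mul _ ((hg j).pow measurable_const), ← h2]
        ring
    _ = Kp * Cg * ∫⁻ s in Set.Ioo (0:ℝ) T,
          ∑' j : ℤ, ENNReal.ofReal ((2:ℝ)^(-2*j)) * g j s ^ p := by
        congr 1
        exact (lintegral_tsum fun j =>
          (measurable_const.mul ((hg j).pow measurable_const)).aemeasurable).symm
    _ ≤ ENNReal.ofReal ((Kp * Cg).toReal + 1) * ∫⁻ s in Set.Ioo (0:ℝ) T,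
          ∑' j : ℤ, ENNReal.ofReal ((2:ℝ)^(-2*j)) * g j s ^ p := by
        refine mul_le_mul_left ?_ _
        conv_lhs => rw [← ENNReal.ofReal_toReal hCtot]
        exact ENNReal.ofReal_le_ofReal (by linarith)
end

section
/- Let 1 < p < ∞, 0 < α < 1, c > 0, and f_j(r) = e^{-c 2^{2jα} r}. Then for any nonnegative measurable g_j on (0,T), ∫_0^T ∫_0^t (Σ_{j∈ℤ} f_j(t−s) g_j(s))^p ds dt ≤ C ∫_0^T Σ_{j∈ℤ} 2^{-2jα} g_j(s)^p ds, with C independent of T, corresponding to the homogeneous Besov space Ḃ_p^{-2α/p} regularity gain for the fractional heat semigroup. -/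
open MeasureTheory Real ENNReal
open Set

lemma exp_neg_le (m : ℕ) {x : ℝ} (hx : 0 < x) :
    Real.exp (-x) ≤ m.factorial * x ^ (-(m:ℝ)) := by
  have h1 : x ^ m / m.factorial ≤ Real.exp x := by
    calc x ^ m / m.factorial ≤ ∑ i ∈ Finset.range (m+1), x ^ i / i.factorial :=
          Finset.single_le_sum (f := fun i => x ^ i / i.factorial)
            (fun i _ => by positivity) (Finset.self_mem_range_succ m)
      _ ≤ Real.exp x := Real.sum_le_exp_of_nonneg hx.le _
  have h2 : (0:ℝ) < x ^ m / m.factorial := by positivity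
  rw [Real.exp_neg]
  calc (Real.exp x)⁻¹ ≤ (x ^ m / m.factorial)⁻¹ := inv_anti₀ h2 h1
    _ = m.factorial * x ^ (-(m:ℝ)) := by
        rw [Real.rpow_neg hx.le, Real.rpow_natCast]
        field_simp


def eLe (J : ℤ) : ℕ ≃ {j : ℤ // j ∈ {i : ℤ | i ≤ J}} :=
  { toFun := fun n => ⟨J - n, by simp only [Set.mem_setOf_eq]; omega⟩
    invFun := fun j => (J - j).toNat
    left_inv := fun n => by simp
    right_inv := fun j => Subtype.ext (by
      have h := j.2; simp only [Set.mem_setOf_eq] at h; simp; omega) }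

def eGt (J : ℤ) : ℕ ≃ {j : ℤ // j ∈ {i : ℤ | i ≤ J}ᶜ} :=
  { toFun := fun n => ⟨J + 1 + n, by
      simp only [Set.mem_compl_iff, Set.mem_setOf_eq]; omega⟩
    invFun := fun j => (j - (J + 1)).toNat
    left_inv := fun n => by simp
    right_inv := fun j => Subtype.ext (by
      have h := j.2; simp only [Set.mem_compl_iff, Set.mem_setOf_eq] at h; simp; omega) }

lemma kernel_sum {ρ a β : ℝ} (hρ : 1 < ρ) (ha : 0 < a) (hβ : 0 < β) :
    ∃ K > (0:ℝ), ∀ r : ℝ, 0 < r →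
      ∑' j : ℤ, ENNReal.ofReal ((ρ ^ j) ^ β * Real.exp (-(a * ρ ^ j * r))) ≤
        ENNReal.ofReal (K * r ^ (-β)) := by
  have hρ0 : (0:ℝ) < ρ := lt_trans one_pos hρ
  set m : ℕ := ⌊β⌋₊ + 1 with hm
  have hβm : β < m := by rw [hm]; push_cast; exact Nat.lt_floor_add_one β
  set y1 : ℝ := ρ ^ (-β) with hy1
  set y2 : ℝ := ρ ^ (β - m) with hy2
  have hy1pos : 0 < y1 := Real.rpow_pos_of_pos hρ0 _
  have hy1lt : y1 < 1 := Real.rpow_lt_one_of_one_lt_of_neg hρ (by linarith)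
  have hy2pos : 0 < y2 := Real.rpow_pos_of_pos hρ0 _
  have hy2lt : y2 < 1 := Real.rpow_lt_one_of_one_lt_of_neg hρ (by linarith)
  have hfacpos : (0:ℝ) < m.factorial := by positivity
  have hampos : (0:ℝ) < a ^ (-(m:ℝ)) := Real.rpow_pos_of_pos ha _
  have h1y1 : (0:ℝ) < 1 - y1 := by linarith
  have h1y2 : (0:ℝ) < 1 - y2 := by linarith
  set K1 : ℝ := (1 - y1)⁻¹ with hK1
  set K2 : ℝ := (m.factorial * a ^ (-(m:ℝ))) * (1 - y2)⁻¹ with hK2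
  have hK1pos : 0 < K1 := by positivity
  have hK2pos : 0 < K2 := by positivity
  refine ⟨K1 + K2, by positivity, fun r hr => ?_⟩
  set J : ℤ := ⌊Real.logb ρ r⁻¹⌋ with hJ
  have hrinv : (0:ℝ) < r⁻¹ := by positivity
  have hJle : ρ ^ (J:ℝ) ≤ r⁻¹ := by
    calc ρ ^ (J:ℝ) ≤ ρ ^ (Real.logb ρ r⁻¹) :=
          Real.rpow_le_rpow_of_exponent_le hρ.le (Int.floor_le _)
      _ = r⁻¹ := Real.rpow_logb hρ0 (ne_of_gt hρ) hrinv
  have hJge : r⁻¹ ≤ ρ ^ ((J:ℝ) + 1) := by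
    calc r⁻¹ = ρ ^ (Real.logb ρ r⁻¹) := (Real.rpow_logb hρ0 (ne_of_gt hρ) hrinv).symm
      _ ≤ ρ ^ ((J:ℝ) + 1) := Real.rpow_le_rpow_of_exponent_le hρ.le
          (Int.lt_floor_add_one _).le
  set f : ℤ → ℝ≥0∞ := fun j => ENNReal.ofReal ((ρ ^ j) ^ β * Real.exp (-(a * ρ ^ j * r)))
    with hf
  have hsplit : ∑' j : ℤ, f j
      = (∑' j : {j : ℤ // j ∈ {i : ℤ | i ≤ J}}, f j)
        + ∑' j : {j : ℤ // j ∈ {i : ℤ | i ≤ J}ᶜ}, f j :=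
    (Summable.tsum_add_tsum_compl ENNReal.summable ENNReal.summable).symm
  have h1 : (∑' j : {j : ℤ // j ∈ {i : ℤ | i ≤ J}}, f j) = ∑' n : ℕ, f (J - n) := by
    rw [← (eLe J).tsum_eq]
    simp only [eLe, Equiv.coe_fn_mk]
  have h2 : (∑' j : {j : ℤ // j ∈ {i : ℤ | i ≤ J}ᶜ}, f j) = ∑' n : ℕ, f (J + 1 + n) := by
    rw [← (eGt J).tsum_eq]
    simp only [eGt, Equiv.coe_fn_mk]
  -- per-term bound, part 1
  have bound1 : ∀ n : ℕ, f (J - n) ≤ ENNReal.ofReal (r ^ (-β)) * ENNReal.ofReal y1 ^ n := by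
    intro n
    rw [← ENNReal.ofReal_pow hy1pos.le, ← ENNReal.ofReal_mul (by positivity)]
    apply ENNReal.ofReal_le_ofReal
    have hx : (0:ℝ) < ρ ^ (J - (n:ℤ)) := zpow_pos hρ0 _
    have hexp : Real.exp (-(a * ρ ^ (J - (n:ℤ)) * r)) ≤ 1 := by
      rw [Real.exp_le_one_iff]
      have : (0:ℝ) < a * ρ ^ (J - (n:ℤ)) * r := by positivity
      linarith
    have hkey : ((ρ:ℝ) ^ (J - (n:ℤ))) ^ β ≤ r ^ (-β) * y1 ^ n := by
      have e : ((ρ:ℝ) ^ (J - (n:ℤ))) ^ β = ρ ^ ((J:ℝ) * β) * y1 ^ n := by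
        rw [← Real.rpow_intCast ρ (J - n), ← Real.rpow_mul hρ0.le, hy1,
          ← Real.rpow_natCast (ρ ^ (-β)) n, ← Real.rpow_mul hρ0.le, ← Real.rpow_add hρ0]
        congr 1
        push_cast
        ring
      rw [e]
      have hJβ : ρ ^ ((J:ℝ) * β) ≤ r ^ (-β) := by
        rw [Real.rpow_mul hρ0.le, Real.rpow_neg hr.le, ← Real.inv_rpow hr.le]
        exact Real.rpow_le_rpow (Real.rpow_nonneg hρ0.le _) hJle hβ.le
      exact mul_le_mul_of_nonneg_right hJβ (pow_nonneg hy1pos.le n)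
    calc ((ρ:ℝ) ^ (J - (n:ℤ))) ^ β * Real.exp (-(a * ρ ^ (J - (n:ℤ)) * r))
        ≤ ((ρ:ℝ) ^ (J - (n:ℤ))) ^ β * 1 :=
          mul_le_mul_of_nonneg_left hexp (Real.rpow_nonneg hx.le _)
      _ = ((ρ:ℝ) ^ (J - (n:ℤ))) ^ β := mul_one _
      _ ≤ r ^ (-β) * y1 ^ n := hkey
  -- per-term bound, part 2
  have bound2 : ∀ n : ℕ, f (J + 1 + n) ≤
      ENNReal.ofReal ((m.factorial * a ^ (-(m:ℝ))) * r ^ (-β)) * ENNReal.ofReal y2 ^ n := by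
    intro n
    rw [← ENNReal.ofReal_pow hy2pos.le, ← ENNReal.ofReal_mul (by positivity)]
    apply ENNReal.ofReal_le_ofReal
    set x : ℝ := ρ ^ (J + 1 + (n:ℤ)) with hxdef
    have hx : (0:ℝ) < x := zpow_pos hρ0 _
    have hu : (0:ℝ) < a * x * r := by positivity
    have hexp : Real.exp (-(a * x * r)) ≤ m.factorial * (a * x * r) ^ (-(m:ℝ)) :=
      exp_neg_le m hu
    have hsplitpow : (a * x * r) ^ (-(m:ℝ)) = a ^ (-(m:ℝ)) * x ^ (-(m:ℝ)) * r ^ (-(m:ℝ)) := by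
      rw [Real.mul_rpow (by positivity) hr.le, Real.mul_rpow ha.le hx.le]
    have hxx : x ^ β * x ^ (-(m:ℝ)) = x ^ (β - m) := by
      rw [← Real.rpow_add hx]
      ring_nf
    have hxbm : x ^ (β - (m:ℝ)) ≤ r ^ ((m:ℝ) - β) * y2 ^ n := by
      have e : x ^ (β - (m:ℝ)) = (ρ ^ ((J:ℝ) + 1)) ^ (β - m) * y2 ^ n := by
        rw [hxdef, ← Real.rpow_intCast ρ (J + 1 + n), ← Real.rpow_mul hρ0.le,
          ← Real.rpow_mul hρ0.le, hy2, ← Real.rpow_natCast (ρ ^ (β - (m:ℝ))) n,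
          ← Real.rpow_mul hρ0.le, ← Real.rpow_add hρ0]
        congr 1
        push_cast
        ring
      rw [e]
      have h1 : (ρ ^ ((J:ℝ) + 1)) ^ (β - m) ≤ r ^ ((m:ℝ) - β) := by
        have := Real.rpow_le_rpow_of_nonpos hrinv hJge (by linarith : β - (m:ℝ) ≤ 0)
        calc (ρ ^ ((J:ℝ) + 1)) ^ (β - m) ≤ (r⁻¹) ^ (β - (m:ℝ)) := this
          _ = r ^ ((m:ℝ) - β) := by
              rw [← Real.rpow_neg_one r, ← Real.rpow_mul hr.le]
              ring_nf
      exact mul_le_mul_of_nonneg_right h1 (pow_nonneg hy2pos.le n)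
    calc x ^ β * Real.exp (-(a * x * r))
        ≤ x ^ β * (m.factorial * (a * x * r) ^ (-(m:ℝ))) :=
          mul_le_mul_of_nonneg_left hexp (Real.rpow_nonneg hx.le _)
      _ = (m.factorial * a ^ (-(m:ℝ))) * (x ^ β * x ^ (-(m:ℝ))) * r ^ (-(m:ℝ)) := by
          rw [hsplitpow]; ring
      _ = (m.factorial * a ^ (-(m:ℝ))) * x ^ (β - m) * r ^ (-(m:ℝ)) := by rw [hxx]
      _ ≤ (m.factorial * a ^ (-(m:ℝ))) * (r ^ ((m:ℝ) - β) * y2 ^ n) * r ^ (-(m:ℝ)) := by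
          apply mul_le_mul_of_nonneg_right _ (Real.rpow_nonneg hr.le _)
          exact mul_le_mul_of_nonneg_left hxbm (by positivity)
      _ = (m.factorial * a ^ (-(m:ℝ))) * r ^ (-β) * y2 ^ n := by
          have : r ^ ((m:ℝ) - β) * r ^ (-(m:ℝ)) = r ^ (-β) := by
            rw [← Real.rpow_add hr]; ring_nf
          calc (m.factorial * a ^ (-(m:ℝ))) * (r ^ ((m:ℝ) - β) * y2 ^ n) * r ^ (-(m:ℝ))
              = (m.factorial * a ^ (-(m:ℝ))) * (r ^ ((m:ℝ) - β) * r ^ (-(m:ℝ))) * y2 ^ n := by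
                ring
            _ = (m.factorial * a ^ (-(m:ℝ))) * r ^ (-β) * y2 ^ n := by rw [this]
  -- geometric sums
  have geo : ∀ y : ℝ, 0 < y → y < 1 → ∀ A : ℝ, 0 ≤ A →
      (∑' n : ℕ, ENNReal.ofReal A * ENNReal.ofReal y ^ n) = ENNReal.ofReal (A * (1 - y)⁻¹) := by
    intro y hy0 hy1' A hA
    rw [ENNReal.tsum_mul_left, ENNReal.tsum_geometric]
    rw [ENNReal.ofReal_mul hA]
    congr 1
    rw [← ENNReal.ofReal_one, ← ENNReal.ofReal_sub _ hy0.le, ENNReal.ofReal_inv_of_pos (by linarith)]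
  calc ∑' j : ℤ, f j
      = (∑' n : ℕ, f (J - n)) + ∑' n : ℕ, f (J + 1 + n) := by rw [hsplit, h1, h2]
    _ ≤ (∑' n : ℕ, ENNReal.ofReal (r ^ (-β)) * ENNReal.ofReal y1 ^ n)
        + ∑' n : ℕ, ENNReal.ofReal ((m.factorial * a ^ (-(m:ℝ))) * r ^ (-β)) * ENNReal.ofReal y2 ^ n := by
        gcongr with n n
        exacts [bound1 n, bound2 n]
    _ = ENNReal.ofReal (r ^ (-β) * (1 - y1)⁻¹)
        + ENNReal.ofReal ((m.factorial * a ^ (-(m:ℝ))) * r ^ (-β) * (1 - y2)⁻¹) := by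
        rw [geo y1 hy1pos hy1lt _ (by positivity), geo y2 hy2pos hy2lt _ (by positivity)]
    _ = ENNReal.ofReal ((K1 + K2) * r ^ (-β)) := by
        rw [← ENNReal.ofReal_add (by positivity) (by positivity)]
        congr 1
        rw [hK1, hK2]
        ring

lemma exp_int_Ioi {b : ℝ} (hb : 0 < b) :
    (∫ x in Ioi (0:ℝ), Real.exp (-(b * x))) = b⁻¹ := by
  have := MeasureTheory.integral_comp_mul_left_Ioi (fun x => Real.exp (-x)) 0 hb
  simp only [mul_zero, smul_eq_mul] at this
  rw [show (fun x => Real.exp (-(b * x))) = (fun x => Real.exp (-(b * x))) from rfl]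
  calc (∫ x in Ioi (0:ℝ), Real.exp (-(b * x))) = b⁻¹ * ∫ x in Ioi (0:ℝ), Real.exp (-x) := this
    _ = b⁻¹ := by rw [integral_exp_neg_Ioi_zero, mul_one]

lemma time_int {b : ℝ} (hb : 0 < b) :
    ∫⁻ r in Set.Ioi (0:ℝ), ENNReal.ofReal (r ^ (-(1/2):ℝ) * Real.exp (-(b * r))) ≤
      ENNReal.ofReal (3 * b ^ (-(1/2):ℝ)) := by
  have hbi : (0:ℝ) < b⁻¹ := by positivity
  have hsplit : Ioi (0:ℝ) = Ioc 0 b⁻¹ ∪ Ioi b⁻¹ := (Set.Ioc_union_Ioi_eq_Ioi hbi.le).symm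
  have hb12 : (b⁻¹) ^ ((1:ℝ)/2) = b ^ (-(1/2):ℝ) := by
    rw [← Real.rpow_neg_one b, ← Real.rpow_mul hb.le]
    norm_num
  rw [hsplit, lintegral_union measurableSet_Ioi (Set.Ioc_disjoint_Ioi le_rfl)]
  have part1 : ∫⁻ r in Ioc (0:ℝ) b⁻¹, ENNReal.ofReal (r ^ (-(1/2):ℝ) * Real.exp (-(b * r)))
      ≤ ENNReal.ofReal (2 * b ^ (-(1/2):ℝ)) := by
    have step : ∫⁻ r in Ioc (0:ℝ) b⁻¹, ENNReal.ofReal (r ^ (-(1/2):ℝ) * Real.exp (-(b * r)))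
        ≤ ∫⁻ r in Ioc (0:ℝ) b⁻¹, ENNReal.ofReal (r ^ (-(1/2):ℝ)) := by
      apply setLIntegral_mono (by fun_prop)
      intro x hx
      apply ENNReal.ofReal_le_ofReal
      have hx0 : (0:ℝ) < x := hx.1
      have : Real.exp (-(b * x)) ≤ 1 := by
        rw [Real.exp_le_one_iff]
        nlinarith
      nlinarith [Real.rpow_nonneg hx0.le (-(1/2):ℝ), Real.exp_pos (-(b*x))]
    refine step.trans ?_
    have hint : IntegrableOn (fun r : ℝ => r ^ (-(1/2):ℝ)) (Ioc 0 b⁻¹) := by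
      rw [← Set.uIoc_of_le hbi.le, ← intervalIntegrable_iff]
      exact intervalIntegral.intervalIntegrable_rpow' (by norm_num)
    rw [← ofReal_integral_eq_lintegral_ofReal hint ?_]
    · apply ENNReal.ofReal_le_ofReal
      rw [← intervalIntegral.integral_of_le hbi.le,
        integral_rpow (Or.inl (by norm_num : (-1:ℝ) < -(1/2)))]
      rw [Real.zero_rpow (by norm_num : (-(1/2):ℝ) + 1 ≠ 0)]
      norm_num
      rw [hb12]
      linarith
    · filter_upwards [ae_restrict_mem measurableSet_Ioc] with x hx
      exact Real.rpow_nonneg hx.1.le _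
  have part2 : ∫⁻ r in Ioi b⁻¹, ENNReal.ofReal (r ^ (-(1/2):ℝ) * Real.exp (-(b * r)))
      ≤ ENNReal.ofReal (b ^ (-(1/2):ℝ)) := by
    have step : ∫⁻ r in Ioi b⁻¹, ENNReal.ofReal (r ^ (-(1/2):ℝ) * Real.exp (-(b * r)))
        ≤ ∫⁻ r in Ioi b⁻¹, ENNReal.ofReal (b ^ ((1:ℝ)/2)) * ENNReal.ofReal (Real.exp (-(b * r))) := by
      apply setLIntegral_mono (by fun_prop)
      intro x hx
      rw [← ENNReal.ofReal_mul (Real.rpow_nonneg hb.le _)]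
      apply ENNReal.ofReal_le_ofReal
      have hx0 : b⁻¹ < x := hx
      have h1 : x ^ (-(1/2):ℝ) ≤ b ^ ((1:ℝ)/2) := by
        have := Real.rpow_le_rpow_of_nonpos hbi hx0.le (by norm_num : (-(1/2):ℝ) ≤ 0)
        calc x ^ (-(1/2):ℝ) ≤ (b⁻¹) ^ (-(1/2):ℝ) := this
          _ = b ^ ((1:ℝ)/2) := by
            rw [← Real.rpow_neg_one b, ← Real.rpow_mul hb.le]
            norm_num
      exact mul_le_mul_of_nonneg_right h1 (Real.exp_pos _).le
    refine step.trans ?_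
    rw [lintegral_const_mul _ (by fun_prop)]
    calc ENNReal.ofReal (b ^ ((1:ℝ)/2)) * ∫⁻ r in Ioi b⁻¹, ENNReal.ofReal (Real.exp (-(b * r)))
        ≤ ENNReal.ofReal (b ^ ((1:ℝ)/2)) * ∫⁻ r in Ioi 0, ENNReal.ofReal (Real.exp (-(b * r))) := by
          gcongr
      _ = ENNReal.ofReal (b ^ ((1:ℝ)/2)) * ENNReal.ofReal b⁻¹ := by
          congr 1
          rw [← ofReal_integral_eq_lintegral_ofReal]
          · rw [exp_int_Ioi hb]
          · have := exp_neg_integrableOn_Ioi 0 hb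
            simpa [neg_mul, IntegrableOn] using this
          · filter_upwards with x using (Real.exp_pos _).le
      _ = ENNReal.ofReal (b ^ (-(1/2):ℝ)) := by
          rw [← ENNReal.ofReal_mul (Real.rpow_nonneg hb.le _)]
          congr 1
          rw [← Real.rpow_neg_one b, ← Real.rpow_add hb]
          norm_num
  calc _ ≤ ENNReal.ofReal (2 * b ^ (-(1/2):ℝ)) + ENNReal.ofReal (b ^ (-(1/2):ℝ)) :=
        add_le_add part1 part2
    _ = ENNReal.ofReal (3 * b ^ (-(1/2):ℝ)) := by
        rw [← ENNReal.ofReal_add (by positivity) (Real.rpow_nonneg hb.le _)]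
        congr 1
        ring

lemma swap_lemma (T : ℝ) (F : ℝ → ℝ → ℝ≥0∞) (hF : Measurable (Function.uncurry F)) :
    ∫⁻ t in Set.Ioo (0:ℝ) T, ∫⁻ s in Set.Ioo (0:ℝ) t, F t s
      = ∫⁻ s in Set.Ioo (0:ℝ) T, ∫⁻ t in Set.Ioo s T, F t s := by
  set G : ℝ × ℝ → ℝ≥0∞ :=
    fun z => Set.indicator {p : ℝ × ℝ | 0 < p.2 ∧ p.2 < p.1} (Function.uncurry F) z with hG
  have hset : MeasurableSet {p : ℝ × ℝ | 0 < p.2 ∧ p.2 < p.1} := by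
    apply MeasurableSet.inter
    · exact measurableSet_lt measurable_const measurable_snd
    · exact measurableSet_lt measurable_snd measurable_fst
  have hGm : Measurable G := hF.indicator hset
  have key1 : ∀ t ∈ Set.Ioo (0:ℝ) T,
      ∫⁻ s in Set.Ioo (0:ℝ) t, F t s = ∫⁻ s in Set.Ioo (0:ℝ) T, G (t, s) := by
    intro t ht
    have h : ∀ s : ℝ, G (t, s) = Set.indicator (Set.Ioo (0:ℝ) t) (F t) s := by
      intro s
      simp only [hG, Set.indicator_apply, Set.mem_setOf_eq, Set.mem_Ioo, Function.uncurry]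
    simp_rw [h]
    rw [lintegral_indicator measurableSet_Ioo, Measure.restrict_restrict measurableSet_Ioo]
    congr 1
    rw [Set.inter_eq_left.mpr (Set.Ioo_subset_Ioo le_rfl ht.2.le)]
  have key2 : ∀ s ∈ Set.Ioo (0:ℝ) T,
      ∫⁻ t in Set.Ioo (0:ℝ) T, G (t, s) = ∫⁻ t in Set.Ioo s T, F t s := by
    intro s hs
    have h : ∀ t : ℝ, G (t, s) = Set.indicator (Set.Ioi s) (fun t => F t s) t := by
      intro t
      simp only [hG, Set.indicator_apply, Set.mem_setOf_eq, Set.mem_Ioi, Function.uncurry]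
      by_cases hc : s < t
      · simp [hc, hs.1]
      · simp [hc, fun (hx : 0 < s ∧ s < t) => hc hx.2]
    simp_rw [h]
    rw [lintegral_indicator measurableSet_Ioi, Measure.restrict_restrict measurableSet_Ioi]
    congr 1
    have : Set.Ioi s ∩ Set.Ioo 0 T = Set.Ioo s T := by
      ext x
      simp only [Set.mem_inter_iff, Set.mem_Ioo, Set.mem_Ioi]
      constructor
      · rintro ⟨h1, _, h3⟩; exact ⟨h1, h3⟩
      · rintro ⟨h1, h2⟩; exact ⟨h1, lt_trans hs.1 h1, h2⟩
    rw [this]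
  calc ∫⁻ t in Set.Ioo (0:ℝ) T, ∫⁻ s in Set.Ioo (0:ℝ) t, F t s
      = ∫⁻ t in Set.Ioo (0:ℝ) T, ∫⁻ s in Set.Ioo (0:ℝ) T, G (t, s) :=
        setLIntegral_congr_fun measurableSet_Ioo key1
    _ = ∫⁻ s in Set.Ioo (0:ℝ) T, ∫⁻ t in Set.Ioo (0:ℝ) T, G (t, s) :=
        lintegral_lintegral_swap hGm.aemeasurable
    _ = ∫⁻ s in Set.Ioo (0:ℝ) T, ∫⁻ t in Set.Ioo s T, F t s :=
        setLIntegral_congr_fun measurableSet_Ioo key2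

lemma translate_int {T s : ℝ} (F : ℝ → ℝ≥0∞) :
    ∫⁻ t in Set.Ioo s T, F (t - s) ≤ ∫⁻ r in Set.Ioi (0:ℝ), F r := by
  have h1 : ∫⁻ t in Set.Ioo s T, F (t - s)
      = ∫⁻ t, Set.indicator (Set.Ioo s T) (fun t => F (t - s)) t := by
    rw [lintegral_indicator measurableSet_Ioo]
  have h2 : ∫⁻ t, Set.indicator (Set.Ioo s T) (fun t => F (t - s)) t
      = ∫⁻ u, Set.indicator (Set.Ioo s T) (fun t => F (t - s)) (u + s) := by
    exact (lintegral_add_right_eq_self _ s).symm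
  have h3 : ∀ u : ℝ, Set.indicator (Set.Ioo s T) (fun t => F (t - s)) (u + s)
      = Set.indicator (Set.Ioo 0 (T - s)) F u := by
    intro u
    simp only [Set.indicator_apply, Set.mem_Ioo, add_sub_cancel_right]
    by_cases hc : s < u + s ∧ u + s < T
    · rw [if_pos hc, if_pos ⟨by linarith [hc.1], by linarith [hc.2]⟩]
    · rw [if_neg hc, if_neg (fun hx => hc ⟨by linarith [hx.1], by linarith [hx.2]⟩)]
  rw [h1, h2]
  simp_rw [h3]
  rw [lintegral_indicator measurableSet_Ioo]
  exact lintegral_mono_set Set.Ioo_subset_Ioi_self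

lemma jensen_tsum {p q : ℝ} (hpq : p.HolderConjugate q) (c x : ℤ → ℝ≥0∞) :
    (∑' j, c j * x j) ^ p ≤ (∑' j, c j) ^ (p - 1) * ∑' j, c j * x j ^ p := by
  have hq0 : (0:ℝ) ≤ 1/q := hpq.symm.one_div_nonneg
  have hp0 : (0:ℝ) ≤ 1/p := hpq.one_div_nonneg
  have hpq1 : 1/p + 1/q = 1 := by
    simpa [one_div] using hpq.inv_add_inv_eq_one
  have h1 : ∀ j, c j * x j = (c j ^ (1/q)) * ((c j ^ (1/p)) * x j) := by
    intro j
    rw [← mul_assoc, ← ENNReal.rpow_add_of_nonneg _ _ hq0 hp0, add_comm, hpq1,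
      ENNReal.rpow_one]
  have hmeas : ∀ f : ℤ → ℝ≥0∞, AEMeasurable f (Measure.count) := fun f =>
    (measurable_of_countable f).aemeasurable
  have holder := ENNReal.lintegral_mul_le_Lp_mul_Lq (Measure.count : Measure ℤ)
    hpq.symm (hmeas (fun j => c j ^ (1/q))) (hmeas (fun j => (c j ^ (1/p)) * x j))
  simp only [lintegral_count, Pi.mul_apply] at holder
  calc (∑' j, c j * x j) ^ p
      = (∑' j, (c j ^ (1/q)) * ((c j ^ (1/p)) * x j)) ^ p := by
        congr 1; exact tsum_congr h1
    _ ≤ ((∑' j, (c j ^ (1/q)) ^ q) ^ (1/q) * (∑' j, ((c j ^ (1/p)) * x j) ^ p) ^ (1/p)) ^ p := by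
        gcongr
        exact hpq.nonneg
    _ = (∑' j, (c j ^ (1/q)) ^ q) ^ (p/q) * (∑' j, ((c j ^ (1/p)) * x j) ^ p) ^ (p*(1/p)) := by
        rw [ENNReal.mul_rpow_of_nonneg _ _ hpq.nonneg, ← ENNReal.rpow_mul, ← ENNReal.rpow_mul]
        ring_nf
    _ = (∑' j, c j) ^ (p - 1) * ∑' j, c j * x j ^ p := by
        rw [mul_one_div_cancel hpq.ne_zero, ENNReal.rpow_one, hpq.div_conj_eq_sub_one]
        congr 1
        · congr 1
          exact tsum_congr fun j => by
            rw [← ENNReal.rpow_mul, one_div, inv_mul_cancel₀ hpq.symm.ne_zero, ENNReal.rpow_one]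
        · exact tsum_congr fun j => by
            rw [ENNReal.mul_rpow_of_nonneg _ _ hpq.nonneg, ← ENNReal.rpow_mul,
              one_div, inv_mul_cancel₀ hpq.ne_zero, ENNReal.rpow_one]

/-- fractional-Laplacian Hardy-type inequality with kernels
f_j(r) = e^{-c 2^{2jα} r} and weights 2^{-2jα}; C is independent of T. -/
theorem stmt18 (p α c : ℝ) (hp : 1 < p) (hα0 : 0 < α) (hα1 : α < 1) (hc : 0 < c) :
    ∃ C > (0:ℝ), ∀ T : ℝ, 0 < T →
      ∀ g : ℤ → ℝ → ℝ≥0∞, (∀ j, Measurable (g j)) →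
        ∫⁻ t in Set.Ioo (0:ℝ) T, ∫⁻ s in Set.Ioo (0:ℝ) t,
            (∑' j : ℤ, ENNReal.ofReal (Real.exp (-c * (2:ℝ) ^ (2*(j:ℝ)*α) * (t - s))) *
              g j s) ^ p
          ≤ ENNReal.ofReal C *
            ∫⁻ s in Set.Ioo (0:ℝ) T,
              ∑' j : ℤ, ENNReal.ofReal ((2:ℝ) ^ (-2*(j:ℝ)*α)) * (g j s) ^ p := by
  have hpq : p.HolderConjugate (Real.conjExponent p) := Real.HolderConjugate.conjExponent hp
  set ρ : ℝ := (2:ℝ) ^ (2*α) with hρdef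
  have hρ : 1 < ρ := by
    rw [hρdef, Real.one_lt_rpow_iff_of_pos (by norm_num)]
    left; constructor <;> [norm_num; linarith]
  have hρ0 : (0:ℝ) < ρ := lt_trans one_pos hρ
  have hzj : ∀ j : ℤ, (0:ℝ) < ρ ^ j := fun j => zpow_pos hρ0 j
  have hp1 : (0:ℝ) < p - 1 := by linarith
  set σ : ℝ := 1/(2*(p-1)) with hσ
  have hσpos : 0 < σ := by rw [hσ]; positivity
  have hσ1 : σ * (p - 1) = 1/2 := by rw [hσ]; field_simp
  have hσ2 : σ * (1 - p) = -(1/2) := by nlinarith [hσ1]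
  set d : ℝ := c * (1 + p) / 2 with hd
  have hdpos : 0 < d := by rw [hd]; positivity
  obtain ⟨K1, hK1pos, hK1⟩ := kernel_sum (a := c/2) (β := σ) hρ (by linarith) hσpos
  have hconv : ∀ j : ℤ, (2:ℝ) ^ (2*(j:ℝ)*α) = ρ ^ j := by
    intro j
    rw [← Real.rpow_intCast ρ j, hρdef, ← Real.rpow_mul (by norm_num : (0:ℝ) ≤ 2)]
    congr 1; ring
  have hconvneg : ∀ j : ℤ, ((ρ:ℝ) ^ j) ^ (-1:ℝ) = (2:ℝ) ^ (-2*(j:ℝ)*α) := by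
    intro j
    rw [← hconv j, ← Real.rpow_mul (by norm_num : (0:ℝ) ≤ 2)]
    congr 1; ring
  have hCpos : (0:ℝ) < K1 ^ (p-1) * (3 * d ^ (-(1/2):ℝ)) := by
    have h1 : (0:ℝ) < K1 ^ (p-1) := Real.rpow_pos_of_pos hK1pos _
    have h2 : (0:ℝ) < d ^ (-(1/2):ℝ) := Real.rpow_pos_of_pos hdpos _
    positivity
  refine ⟨K1 ^ (p-1) * (3 * d ^ (-(1/2):ℝ)), hCpos, fun T hT g hg => ?_⟩
  set W : ℤ → ℝ → ℝ := fun j r =>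
    (ρ ^ j) ^ (σ*(1-p)) * (r ^ (-(1/2):ℝ) * Real.exp (-(d * ρ ^ j * r))) with hW
  -- pointwise Jensen bound
  have pointwise : ∀ t s : ℝ, 0 < s → s < t →
      (∑' j : ℤ, ENNReal.ofReal (Real.exp (-c * (2:ℝ) ^ (2*(j:ℝ)*α) * (t - s))) * g j s) ^ p
        ≤ ENNReal.ofReal (K1 ^ (p-1)) *
          ∑' j : ℤ, ENNReal.ofReal (W j (t-s)) * (g j s) ^ p := by
    intro t s hs0 hst
    have hr : (0:ℝ) < t - s := by linarith
    set r : ℝ := t - s with hrdef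
    set Cc : ℤ → ℝ≥0∞ := fun j =>
      ENNReal.ofReal ((ρ ^ j) ^ σ * Real.exp (-(c / 2 * ρ ^ j * r))) with hCc
    set Xx : ℤ → ℝ≥0∞ := fun j =>
      ENNReal.ofReal ((ρ ^ j) ^ (-σ) * Real.exp (-(c / 2 * ρ ^ j * r))) * g j s with hXx
    have hCX : ∀ j : ℤ,
        ENNReal.ofReal (Real.exp (-c * (2:ℝ) ^ (2*(j:ℝ)*α) * r)) * g j s = Cc j * Xx j := by
      intro j
      rw [hCc, hXx]
      dsimp only
      rw [← mul_assoc, ← ENNReal.ofReal_mul (by positivity)]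
      congr 2
      rw [hconv j]
      have h1 : (ρ ^ j) ^ σ * Real.exp (-(c / 2 * ρ ^ j * r)) *
          ((ρ ^ j) ^ (-σ) * Real.exp (-(c / 2 * ρ ^ j * r)))
          = ((ρ ^ j) ^ σ * (ρ ^ j) ^ (-σ)) *
            (Real.exp (-(c / 2 * ρ ^ j * r)) * Real.exp (-(c / 2 * ρ ^ j * r))) := by ring
      rw [h1, ← Real.rpow_add (hzj j), add_neg_cancel, Real.rpow_zero, ← Real.exp_add, one_mul]
      congr 1; ring
    have perterm : ∀ j : ℤ, ENNReal.ofReal (r ^ (-(1/2):ℝ)) * (Cc j * Xx j ^ p)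
        = ENNReal.ofReal (W j r) * (g j s) ^ p := by
      intro j
      rw [hCc, hXx]
      dsimp only
      rw [ENNReal.mul_rpow_of_nonneg _ _ (by linarith : (0:ℝ) ≤ p),
        ENNReal.ofReal_rpow_of_pos (by positivity)]
      have hreal : (ρ ^ j) ^ (-σ:ℝ) * Real.exp (-(c / 2 * ρ ^ j * r)) = Real.exp (0) * ((ρ ^ j) ^ (-σ:ℝ) * Real.exp (-(c / 2 * ρ ^ j * r))) := by
        rw [Real.exp_zero, one_mul]
      have hup : ((ρ ^ j) ^ (-σ:ℝ) * Real.exp (-(c / 2 * ρ ^ j * r))) ^ p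
          = (ρ ^ j) ^ (-σ * p) * Real.exp (-(c / 2 * ρ ^ j * r) * p) := by
        rw [Real.mul_rpow (Real.rpow_nonneg (hzj j).le _) (Real.exp_pos _).le,
          Real.rpow_mul (hzj j).le, Real.exp_mul]
      rw [hup]
      rw [← mul_assoc, ← ENNReal.ofReal_mul (by positivity), ← mul_assoc,
        ← ENNReal.ofReal_mul (by positivity)]
      congr 2
      have e1 : (ρ ^ j) ^ (σ:ℝ) * (ρ ^ j) ^ (-σ * p) = (ρ ^ j) ^ (σ*(1-p)) := by
        rw [← Real.rpow_add (hzj j)]; congr 1; ring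
      have e2 : Real.exp (-(c / 2 * ρ ^ j * r)) * Real.exp (-(c / 2 * ρ ^ j * r) * p)
          = Real.exp (-(d * ρ ^ j * r)) := by
        rw [← Real.exp_add]; congr 1; rw [hd]; ring
      have hrearr : r ^ (-(1/2):ℝ) * ((ρ ^ j) ^ (σ:ℝ) * Real.exp (-(c / 2 * ρ ^ j * r))) *
          ((ρ ^ j) ^ (-σ * p) * Real.exp (-(c / 2 * ρ ^ j * r) * p))
          = ((ρ ^ j) ^ (σ:ℝ) * (ρ ^ j) ^ (-σ * p)) *
            ((Real.exp (-(c / 2 * ρ ^ j * r)) * Real.exp (-(c / 2 * ρ ^ j * r) * p)) *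
              r ^ (-(1/2):ℝ)) := by ring
      rw [hrearr, e1, e2, hW]
      ring
    calc (∑' j : ℤ, ENNReal.ofReal (Real.exp (-c * (2:ℝ) ^ (2*(j:ℝ)*α) * r)) * g j s) ^ p
        = (∑' j : ℤ, Cc j * Xx j) ^ p := by rw [tsum_congr hCX]
      _ ≤ (∑' j : ℤ, Cc j) ^ (p-1) * ∑' j : ℤ, Cc j * Xx j ^ p := jensen_tsum hpq Cc Xx
      _ ≤ (ENNReal.ofReal (K1 * r ^ (-σ))) ^ (p-1) * ∑' j : ℤ, Cc j * Xx j ^ p := by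
          exact mul_le_mul_left (ENNReal.rpow_le_rpow (hK1 r hr) (by linarith)) _
      _ = ENNReal.ofReal (K1 ^ (p-1)) * ENNReal.ofReal (r ^ (-(1/2):ℝ)) *
            ∑' j : ℤ, Cc j * Xx j ^ p := by
          rw [ENNReal.ofReal_rpow_of_pos (by positivity),
            ← ENNReal.ofReal_mul (by positivity)]
          congr 2
          rw [Real.mul_rpow hK1pos.le (Real.rpow_nonneg hr.le _), ← Real.rpow_mul hr.le]
          congr 2
          linear_combination (-1:ℝ) * hσ1
      _ = ENNReal.ofReal (K1 ^ (p-1)) * ∑' j : ℤ, ENNReal.ofReal (W j r) * (g j s) ^ p := by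
          rw [mul_assoc]
          congr 1
          rw [← ENNReal.tsum_mul_left]
          exact tsum_congr perterm
  -- the per-j integral bound
  have jint : ∀ (j : ℤ) (s : ℝ), ∫⁻ t in Set.Ioo s T, ENNReal.ofReal (W j (t - s))
      ≤ ENNReal.ofReal (3 * d ^ (-(1/2):ℝ)) * ENNReal.ofReal ((2:ℝ) ^ (-2*(j:ℝ)*α)) := by
    intro j s
    calc ∫⁻ t in Set.Ioo s T, ENNReal.ofReal (W j (t - s))
        ≤ ∫⁻ r in Set.Ioi (0:ℝ), ENNReal.ofReal (W j r) :=
          translate_int (fun r => ENNReal.ofReal (W j r))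
      _ = ENNReal.ofReal ((ρ ^ j) ^ (σ*(1-p))) *
            ∫⁻ r in Set.Ioi (0:ℝ),
              ENNReal.ofReal (r ^ (-(1/2):ℝ) * Real.exp (-(d * ρ ^ j * r))) := by
          rw [hW]
          simp_rw [ENNReal.ofReal_mul (Real.rpow_nonneg (hzj j).le _)]
          rw [lintegral_const_mul' _ _ ENNReal.ofReal_ne_top]
      _ ≤ ENNReal.ofReal ((ρ ^ j) ^ (σ*(1-p))) *
            ENNReal.ofReal (3 * (d * ρ ^ j) ^ (-(1/2):ℝ)) := by
          gcongr
          exact time_int (by positivity : (0:ℝ) < d * ρ ^ j)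
      _ = ENNReal.ofReal (3 * d ^ (-(1/2):ℝ)) * ENNReal.ofReal ((2:ℝ) ^ (-2*(j:ℝ)*α)) := by
          rw [← ENNReal.ofReal_mul (Real.rpow_nonneg (hzj j).le _),
            ← ENNReal.ofReal_mul (by positivity)]
          congr 1
          rw [Real.mul_rpow hdpos.le (hzj j).le]
          have e1 : (ρ ^ j) ^ (σ*(1-p)) * (ρ ^ j) ^ (-(1/2):ℝ) = ((ρ:ℝ) ^ j) ^ (-1:ℝ) := by
            rw [← Real.rpow_add (hzj j)]
            congr 1
            linarith [hσ2]
          calc (ρ ^ j) ^ (σ*(1-p)) * (3 * (d ^ (-(1/2):ℝ) * (ρ ^ j) ^ (-(1/2):ℝ)))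
              = (3 * d ^ (-(1/2):ℝ)) * ((ρ ^ j) ^ (σ*(1-p)) * (ρ ^ j) ^ (-(1/2):ℝ)) := by ring
            _ = (3 * d ^ (-(1/2):ℝ)) * (2:ℝ) ^ (-2*(j:ℝ)*α) := by rw [e1, hconvneg j]
  -- inner integral bound after swapping
  set F : ℝ → ℝ → ℝ≥0∞ := fun t s => ∑' j : ℤ, ENNReal.ofReal (W j (t - s)) * (g j s) ^ p
    with hF
  have hFmeas : Measurable (Function.uncurry F) := by
    apply Measurable.ennreal_tsum
    intro j
    have := hg j
    fun_prop
  have inner_bound : ∀ s : ℝ, ∫⁻ t in Set.Ioo s T, F t s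
      ≤ ENNReal.ofReal (3 * d ^ (-(1/2):ℝ)) *
        ∑' j : ℤ, ENNReal.ofReal ((2:ℝ) ^ (-2*(j:ℝ)*α)) * (g j s) ^ p := by
    intro s
    have hsw : ∫⁻ t in Set.Ioo s T, F t s
        = ∑' j : ℤ, (∫⁻ t in Set.Ioo s T, ENNReal.ofReal (W j (t - s))) * (g j s) ^ p := by
      rw [hF]
      rw [lintegral_tsum (fun j => by
        have := hg j
        apply AEMeasurable.mul _ aemeasurable_const
        fun_prop)]
      exact tsum_congr fun j => lintegral_mul_const _ (by fun_prop)
    rw [hsw]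
    calc ∑' j : ℤ, (∫⁻ t in Set.Ioo s T, ENNReal.ofReal (W j (t - s))) * (g j s) ^ p
        ≤ ∑' j : ℤ, (ENNReal.ofReal (3 * d ^ (-(1/2):ℝ)) *
            ENNReal.ofReal ((2:ℝ) ^ (-2*(j:ℝ)*α))) * (g j s) ^ p := by
          gcongr with j
          exact jint j s
      _ = ENNReal.ofReal (3 * d ^ (-(1/2):ℝ)) *
            ∑' j : ℤ, ENNReal.ofReal ((2:ℝ) ^ (-2*(j:ℝ)*α)) * (g j s) ^ p := by
          simp_rw [mul_assoc]
          rw [ENNReal.tsum_mul_left]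
  -- main chain
  calc ∫⁻ t in Set.Ioo (0:ℝ) T, ∫⁻ s in Set.Ioo (0:ℝ) t,
        (∑' j : ℤ, ENNReal.ofReal (Real.exp (-c * (2:ℝ) ^ (2*(j:ℝ)*α) * (t - s))) * g j s) ^ p
      ≤ ∫⁻ t in Set.Ioo (0:ℝ) T, ∫⁻ s in Set.Ioo (0:ℝ) t,
          ENNReal.ofReal (K1 ^ (p-1)) * F t s := by
        apply setLIntegral_mono' measurableSet_Ioo
        intro t ht
        apply setLIntegral_mono' measurableSet_Ioo
        intro s hs
        exact pointwise t s hs.1 hs.2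
    _ = ENNReal.ofReal (K1 ^ (p-1)) *
          ∫⁻ t in Set.Ioo (0:ℝ) T, ∫⁻ s in Set.Ioo (0:ℝ) t, F t s := by
        simp_rw [lintegral_const_mul' _ _ ENNReal.ofReal_ne_top]
    _ = ENNReal.ofReal (K1 ^ (p-1)) *
          ∫⁻ s in Set.Ioo (0:ℝ) T, ∫⁻ t in Set.Ioo s T, F t s := by
        rw [swap_lemma T F hFmeas]
    _ ≤ ENNReal.ofReal (K1 ^ (p-1)) *
          ∫⁻ s in Set.Ioo (0:ℝ) T, ENNReal.ofReal (3 * d ^ (-(1/2):ℝ)) *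
            ∑' j : ℤ, ENNReal.ofReal ((2:ℝ) ^ (-2*(j:ℝ)*α)) * (g j s) ^ p := by
        exact mul_le_mul_right (lintegral_mono inner_bound) _
    _ = ENNReal.ofReal (K1 ^ (p-1) * (3 * d ^ (-(1/2):ℝ))) *
          ∫⁻ s in Set.Ioo (0:ℝ) T,
            ∑' j : ℤ, ENNReal.ofReal ((2:ℝ) ^ (-2*(j:ℝ)*α)) * (g j s) ^ p := by
        rw [lintegral_const_mul' _ _ ENNReal.ofReal_ne_top, ← mul_assoc,
          ← ENNReal.ofReal_mul (by positivity)]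
end
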